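/- Fix an integer k ≥ 1. If a : ℕ → ℝ is a Stieltjes moment sequence, then L_k(a) is also a Stieltjes moment sequence. -/

import Mathlib

open MeasureTheory
open Nat

/-- `a` is a Stieltjes moment sequence: `a 0 ≥ 0` and there is a Borel probability
measure on `ℝ` supported on `[0, ∞)` with all moments finite such that
`a n = a 0 * ∫ x ^ n ∂μ` for all `n`. -/
def IsSM (a : ℕ → ℝ) : Prop :=
  0 ≤ a 0 ∧ ∃ μ : Measure ℝ, IsProbabilityMeasure μ ∧
    μ (Set.Iio (0 : ℝ)) = 0 ∧
    (∀ n : ℕ, Integrable (fun x => x ^ n) μ) ∧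
    (∀ n : ℕ, a n = a 0 * ∫ x, x ^ n ∂μ)

/-- The operator `L_k`: `L_k(a)(n) = det (a (n+i+j))_{0 ≤ i,j ≤ k-1}`. -/
def Lk (k : ℕ) (a : ℕ → ℝ) : ℕ → ℝ :=
  fun n => Matrix.det (Matrix.of fun i j : Fin k => a (n + (i : ℕ) + (j : ℕ)))

noncomputable section SMaux

open Matrix MvPolynomial

variable {k : ℕ}

/-- The Vandermonde determinant as a function of the vector of variables. -/
def Vmd (k : ℕ) (x : Fin k → ℝ) : ℝ := (Matrix.vandermonde x).det

lemma Vmd_eq₁ (x : Fin k → ℝ) :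
    Vmd k x = ∑ σ : Equiv.Perm (Fin k),
      ((Equiv.Perm.sign σ : ℤ) : ℝ) * ∏ i, x i ^ ((σ i : Fin k) : ℕ) := by
  rw [Vmd, ← Matrix.det_transpose, Matrix.det_apply']
  simp [Matrix.vandermonde]

lemma Vmd_eq₂ (x : Fin k → ℝ) :
    Vmd k x = ∑ σ : Equiv.Perm (Fin k),
      ((Equiv.Perm.sign σ : ℤ) : ℝ) * ∏ i, x (σ i) ^ (i : ℕ) := by
  rw [Vmd, Matrix.det_apply']
  simp [Matrix.vandermonde]

lemma Vmd_perm (x : Fin k → ℝ) (τ : Equiv.Perm (Fin k)) :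
    Vmd k (x ∘ τ) = ((Equiv.Perm.sign τ : ℤ) : ℝ) * Vmd k x := by
  have h : Matrix.vandermonde (x ∘ τ) = (Matrix.vandermonde x).submatrix τ id := by
    ext i j; simp [Matrix.vandermonde]
  rw [Vmd, h, Matrix.det_permute, Vmd]

lemma measurable_Vmd : Measurable (Vmd k) := by
  have h : Vmd k = fun x => ∑ σ : Equiv.Perm (Fin k),
      ((Equiv.Perm.sign σ : ℤ) : ℝ) * ∏ i, x i ^ ((σ i : Fin k) : ℕ) :=
    funext Vmd_eq₁
  rw [h]
  exact Finset.measurable_sum _ fun σ _ =>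
    (Finset.measurable_prod _ fun i _ => (measurable_pi_apply i).pow_const _).const_mul _

/-- The Vandermonde determinant as a polynomial. -/
def Vp (k : ℕ) : MvPolynomial (Fin k) ℝ :=
  (Matrix.vandermonde fun i : Fin k => (X i : MvPolynomial (Fin k) ℝ)).det

lemma eval_Vp (x : Fin k → ℝ) : eval x (Vp k) = Vmd k x := by
  rw [Vp, Vmd, RingHom.map_det]
  congr 1
  ext i j
  simp [Matrix.vandermonde]

lemma integrable_eval (μ : Measure ℝ) [IsProbabilityMeasure μ]
    (hint : ∀ n : ℕ, Integrable (fun x => x ^ n) μ) (p : MvPolynomial (Fin k) ℝ) :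
    Integrable (fun x : Fin k → ℝ => eval x p) (Measure.pi fun _ => μ) := by
  letI : MeasureSpace ℝ := ⟨μ⟩
  induction p using MvPolynomial.induction_on' with
  | monomial u c =>
      have h : (fun x : Fin k → ℝ => eval x (monomial u c))
          = fun x => c * ∏ i, (x i) ^ u i := by
        funext x
        rw [eval_monomial, Finsupp.prod_pow]
      rw [h]
      exact (Integrable.fintype_prod (f := fun i t => t ^ u i) fun i => hint (u i)).const_mul c
  | add p q hp hq =>
      simpa [map_add, Pi.add_def] using hp.add hq

lemma integrable_G (μ : Measure ℝ) [IsProbabilityMeasure μ]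
    (hint : ∀ n : ℕ, Integrable (fun x => x ^ n) μ) (d : Fin k → ℕ) (e : ℕ) :
    Integrable (fun x : Fin k → ℝ => (∏ i, x i ^ d i) * (Vmd k x) ^ e)
      (Measure.pi fun _ => μ) := by
  have h : (fun x : Fin k → ℝ =>
      eval x ((∏ i, (X i : MvPolynomial (Fin k) ℝ) ^ d i) * Vp k ^ e))
      = fun x => (∏ i, x i ^ d i) * (Vmd k x) ^ e := by
    funext x
    simp [eval_Vp]
  rw [← h]
  exact integrable_eval μ hint _

lemma integral_comp_perm (μ : Measure ℝ) [IsProbabilityMeasure μ]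
    (g : (Fin k → ℝ) → ℝ) (τ : Equiv.Perm (Fin k)) :
    ∫ x, g (x ∘ τ) ∂(Measure.pi fun _ : Fin k => μ)
      = ∫ x, g x ∂(Measure.pi fun _ : Fin k => μ) := by
  have h := (measurePreserving_piCongrLeft (fun _ : Fin k => μ) τ.symm).integral_comp' g
  have he : ∀ x : Fin k → ℝ,
      (MeasurableEquiv.piCongrLeft (fun _ : Fin k => ℝ) τ.symm) x = x ∘ τ := by
    intro x
    funext j
    have := Equiv.piCongrLeft_apply_apply (fun _ : Fin k => ℝ) τ.symm x (τ j)
    simpa [MeasurableEquiv.coe_piCongrLeft] using this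
  simp_rw [he] at h
  exact h

lemma det_moments (μ : Measure ℝ) [IsProbabilityMeasure μ]
    (hint : ∀ n : ℕ, Integrable (fun x => x ^ n) μ) (n : ℕ) :
    (Matrix.of fun i j : Fin k => ∫ x, x ^ (n + (i : ℕ) + (j : ℕ)) ∂μ).det
      = ∫ x : Fin k → ℝ, (∏ i, x i ^ (n + (i : ℕ))) * Vmd k x
          ∂(Measure.pi fun _ => μ) := by
  letI : MeasureSpace ℝ := ⟨μ⟩
  rw [Matrix.det_apply']
  have h1 : ∀ σ : Equiv.Perm (Fin k),
      (∏ i, (Matrix.of fun i j : Fin k => ∫ x, x ^ (n + (i : ℕ) + (j : ℕ)) ∂μ) (σ i) i)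
      = ∫ x : Fin k → ℝ, ∏ i, x i ^ (n + ((σ i : Fin k) : ℕ) + (i : ℕ))
          ∂(Measure.pi fun _ => μ) := by
    intro σ
    exact (integral_fintype_prod_eq_prod (fun (i : Fin k) (t : ℝ) =>
      t ^ (n + ((σ i : Fin k) : ℕ) + (i : ℕ)))).symm
  simp_rw [h1, ← integral_const_mul]
  rw [← integral_finset_sum]
  · apply integral_congr_ae
    filter_upwards with x
    rw [Vmd_eq₁, Finset.mul_sum]
    apply Finset.sum_congr rfl
    intro σ _
    have h2 : ∀ i : Fin k, x i ^ (n + ((σ i : Fin k) : ℕ) + (i : ℕ))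
        = x i ^ (n + (i : ℕ)) * x i ^ ((σ i : Fin k) : ℕ) := by
      intro i
      rw [← pow_add]
      ring_nf
    simp_rw [h2, Finset.prod_mul_distrib]
    ring
  · intro σ _
    exact ((Integrable.fintype_prod
      (f := fun (i : Fin k) (t : ℝ) => t ^ (n + ((σ i : Fin k) : ℕ) + (i : ℕ)))
      fun i => hint _).const_mul _)

lemma sym_step (μ : Measure ℝ) [IsProbabilityMeasure μ]
    (hint : ∀ n : ℕ, Integrable (fun x => x ^ n) μ) (n : ℕ) :
    (k ! : ℝ) * ∫ x, (∏ i, x i ^ (n + (i : ℕ))) * Vmd k x ∂(Measure.pi fun _ : Fin k => μ)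
      = ∫ x, (∏ i, x i ^ n) * (Vmd k x) ^ 2 ∂(Measure.pi fun _ : Fin k => μ) := by
  classical
  set m := (Measure.pi fun _ : Fin k => μ) with hm
  have step1 : ∀ τ : Equiv.Perm (Fin k),
      ∫ x, (∏ i, x i ^ (n + (i : ℕ))) * Vmd k x ∂m
        = ∫ x, ((Equiv.Perm.sign τ : ℤ) : ℝ) *
            ((∏ j, x j ^ (n + ((τ j : Fin k) : ℕ))) * Vmd k x) ∂m := by
    intro τ
    rw [← integral_comp_perm μ (fun y => (∏ i, y i ^ (n + (i : ℕ))) * Vmd k y) τ.symm]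
    apply integral_congr_ae
    filter_upwards with x
    have hv : Vmd k (x ∘ τ.symm) = ((Equiv.Perm.sign τ : ℤ) : ℝ) * Vmd k x := by
      rw [Vmd_perm, Equiv.Perm.sign_symm]
    have hp : (∏ i, (x ∘ τ.symm) i ^ (n + (i : ℕ)))
        = ∏ j, x j ^ (n + ((τ j : Fin k) : ℕ)) := by
      rw [← Equiv.prod_comp τ (fun i => (x ∘ τ.symm) i ^ (n + (i : ℕ)))]
      apply Finset.prod_congr rfl
      intro j _
      simp
    rw [hv, hp]
    ring
  have hsum : ∑ τ : Equiv.Perm (Fin k),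
      (∫ x, (∏ i, x i ^ (n + (i : ℕ))) * Vmd k x ∂m)
      = (k ! : ℝ) * ∫ x, (∏ i, x i ^ (n + (i : ℕ))) * Vmd k x ∂m := by
    rw [Finset.sum_const, Finset.card_univ, Fintype.card_perm, Fintype.card_fin,
      nsmul_eq_mul]
  rw [← hsum]
  have step2 : ∀ τ : Equiv.Perm (Fin k),
      ∫ x, (∏ i, x i ^ (n + (i : ℕ))) * Vmd k x ∂m
        = ∫ x, ((Equiv.Perm.sign τ : ℤ) : ℝ) *
            ((∏ i, x i ^ n) * Vmd k x * ∏ j, x j ^ ((τ j : Fin k) : ℕ)) ∂m := by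
    intro τ
    rw [step1 τ]
    apply integral_congr_ae
    filter_upwards with x
    simp_rw [pow_add, Finset.prod_mul_distrib]
    ring
  rw [Finset.sum_congr rfl fun τ _ => step2 τ, ← integral_finset_sum]
  · apply integral_congr_ae
    filter_upwards with x
    have : ∑ τ : Equiv.Perm (Fin k), ((Equiv.Perm.sign τ : ℤ) : ℝ) *
        ((∏ i, x i ^ n) * Vmd k x * ∏ j, x j ^ ((τ j : Fin k) : ℕ))
        = ((∏ i, x i ^ n) * Vmd k x) *
          ∑ τ : Equiv.Perm (Fin k), ((Equiv.Perm.sign τ : ℤ) : ℝ) *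
            ∏ j, x j ^ ((τ j : Fin k) : ℕ) := by
      rw [Finset.mul_sum]
      apply Finset.sum_congr rfl
      intro τ _
      ring
    rw [this, ← Vmd_eq₁]
    ring
  · intro τ _
    have : (fun x : Fin k → ℝ => ((Equiv.Perm.sign τ : ℤ) : ℝ) *
        ((∏ i, x i ^ n) * Vmd k x * ∏ j, x j ^ ((τ j : Fin k) : ℕ)))
        = fun x : Fin k → ℝ => ((Equiv.Perm.sign τ : ℤ) : ℝ) *
          ((∏ i, x i ^ (n + ((τ i : Fin k) : ℕ))) * (Vmd k x) ^ 1) := by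
      funext x
      have hr : (∏ i, x i ^ (n + ((τ i : Fin k) : ℕ)))
          = (∏ i, x i ^ n) * ∏ j, x j ^ ((τ j : Fin k) : ℕ) := by
        simp_rw [pow_add, Finset.prod_mul_distrib]
      rw [hr]
      ring
    rw [this]
    exact (integrable_G μ hint _ 1).const_mul _

lemma Lk_key (k : ℕ) (a : ℕ → ℝ) (μ : Measure ℝ) [IsProbabilityMeasure μ]
    (hint : ∀ n : ℕ, Integrable (fun x => x ^ n) μ)
    (hmom : ∀ n : ℕ, a n = a 0 * ∫ x, x ^ n ∂μ) (n : ℕ) :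
    Lk k a n = a 0 ^ k * ((k ! : ℝ)⁻¹ *
      ∫ x, (∏ i, x i ^ n) * (Vmd k x) ^ 2 ∂(Measure.pi fun _ : Fin k => μ)) := by
  have hmat : (Matrix.of fun i j : Fin k => a (n + (i : ℕ) + (j : ℕ)))
      = a 0 • (Matrix.of fun i j : Fin k => ∫ x, x ^ (n + (i : ℕ) + (j : ℕ)) ∂μ) := by
    ext i j
    simp [hmom (n + (i : ℕ) + (j : ℕ)), Matrix.smul_apply]
  rw [Lk, hmat, Matrix.det_smul, Fintype.card_fin, det_moments μ hint n]
  have hfac : (0 : ℝ) < (k ! : ℝ) := by positivity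
  rw [← sym_step μ hint n]
  field_simp

end SMaux

/-- If `a` is a Stieltjes moment sequence, then so is `L_k a`. -/
theorem stmt0 (k : ℕ) (hk : 1 ≤ k) (a : ℕ → ℝ) (ha : IsSM a) : IsSM (Lk k a) := by
  classical
  obtain ⟨ha0, μ, hprob, hsupp, hint, hmom⟩ := ha
  haveI : IsProbabilityMeasure μ := hprob
  set m : Measure (Fin k → ℝ) := Measure.pi fun _ : Fin k => μ with hmdef
  set F : ℕ → (Fin k → ℝ) → ℝ := fun n x => (∏ i, x i ^ n) * (Vmd k x) ^ 2 with hFdef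
  have key : ∀ n : ℕ, Lk k a n = a 0 ^ k * ((k ! : ℝ)⁻¹ * ∫ x, F n x ∂m) :=
    fun n => Lk_key k a μ hint hmom n
  have hF0 : ∀ x : Fin k → ℝ, F 0 x = (Vmd k x) ^ 2 := by
    intro x; simp [hFdef]
  set B : ℝ := ∫ x, F 0 x ∂m with hBdef
  have hFint : ∀ n, Integrable (F n) m := fun n => integrable_G μ hint (fun _ => n) 2
  have hB0 : 0 ≤ B := by
    apply integral_nonneg
    intro x
    rw [hF0 x]
    positivity
  have hLk0 : Lk k a 0 = a 0 ^ k * ((k ! : ℝ)⁻¹ * B) := key 0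
  have hLk0nn : 0 ≤ Lk k a 0 := by
    rw [hLk0]
    have : (0:ℝ) ≤ (k ! : ℝ)⁻¹ := by positivity
    positivity
  by_cases hdeg : a 0 ^ k * B = 0
  · -- degenerate case: all Lk k a n = 0
    have hzero : ∀ n, Lk k a n = 0 := by
      intro n
      rcases mul_eq_zero.1 hdeg with h | h
      · rw [key n, h, zero_mul]
      · -- B = 0, so Vmd^2 = 0 a.e., so F n = 0 a.e.
        have hae : F 0 =ᵐ[m] 0 := by
          refine (integral_eq_zero_iff_of_nonneg ?_ (hFint 0)).1 (by rw [← hBdef]; exact h)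
          intro x
          rw [Pi.zero_apply, hF0 x]
          positivity
        have haen : F n =ᵐ[m] 0 := by
          filter_upwards [hae] with x hx
          have : (Vmd k x) ^ 2 = 0 := by rw [← hF0 x, hx, Pi.zero_apply]
          simp [hFdef, this]
        rw [key n, integral_congr_ae haen]
        simp
    refine ⟨hLk0nn, Measure.dirac 0, by infer_instance, ?_, ?_, ?_⟩
    · rw [Measure.dirac_apply' _ measurableSet_Iio]
      simp
    · intro n
      exact (integrable_const ((0:ℝ) ^ n)).congr (ae_eq_dirac fun x : ℝ => x ^ n).symm
    · intro n
      rw [hzero n, hzero 0, zero_mul]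
  · -- nondegenerate case
    have hBpos : 0 < B := lt_of_le_of_ne hB0 (fun h => hdeg (by rw [← h, mul_zero]))
    set D : (Fin k → ℝ) → NNReal := fun x => Real.toNNReal (F 0 x) with hDdef
    have hDmeas : Measurable D := by
      have : Measurable (F 0) := by
        apply Measurable.mul
        · exact Finset.measurable_prod _ fun i _ => (measurable_pi_apply i).pow_const _
        · exact measurable_Vmd.pow_const 2
      exact this.real_toNNReal
    have hpm : Measurable (fun x : Fin k → ℝ => ∏ i, x i) :=
      Finset.measurable_prod _ fun i _ => measurable_pi_apply i
    set mw : Measure (Fin k → ℝ) := m.withDensity (fun x => (D x : ENNReal)) with hmwdef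
    set ρ : Measure ℝ := mw.map (fun x : Fin k → ℝ => ∏ i, x i) with hρdef
    set c : ENNReal := (ENNReal.ofReal B)⁻¹ with hcdef
    have hcne : ENNReal.ofReal B ≠ 0 := by
      simp [ENNReal.ofReal_eq_zero, not_le, hBpos]
    have hctop : c ≠ ⊤ := by
      simp [hcdef, ENNReal.inv_ne_top, hcne]
    set ν : Measure ℝ := c • ρ with hνdef
    have hmwuniv : mw Set.univ = ENNReal.ofReal B := by
      rw [hmwdef, withDensity_apply _ MeasurableSet.univ, setLIntegral_univ]
      have : ∀ x, ((D x : ENNReal)) = ENNReal.ofReal (F 0 x) := by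
        intro x
        rw [hDdef]
        simp [ENNReal.ofReal]
      simp_rw [this]
      rw [← ofReal_integral_eq_lintegral_ofReal (hFint 0)
        (by filter_upwards with x; rw [Pi.zero_apply, hF0 x]; positivity)]
    have hρuniv : ρ Set.univ = ENNReal.ofReal B := by
      rw [hρdef, Measure.map_apply hpm MeasurableSet.univ]
      simpa using hmwuniv
    haveI hνprob : IsProbabilityMeasure ν := by
      constructor
      rw [hνdef, Measure.smul_apply, hρuniv, hcdef, smul_eq_mul]
      exact ENNReal.inv_mul_cancel hcne ENNReal.ofReal_ne_top
    -- coordinates are a.e. nonnegative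
    have hnull : ∀ i : Fin k, m {x : Fin k → ℝ | x i < 0} = 0 := by
      intro i
      have hset : {x : Fin k → ℝ | x i < 0}
          = Set.pi Set.univ (Function.update (fun _ : Fin k => (Set.univ : Set ℝ)) i
              (Set.Iio 0)) := by
        ext x
        simp only [Set.mem_setOf_eq, Set.mem_pi, Set.mem_univ, forall_true_left]
        constructor
        · intro h j
          rcases eq_or_ne j i with rfl | hj
          · simpa [Function.update] using h
          · simp [Function.update, hj]
        · intro h
          have := h i
          simpa [Function.update] using this
      rw [hset, hmdef, Measure.pi_pi]
      refine Finset.prod_eq_zero (Finset.mem_univ i) ?_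
      simp [Function.update, hsupp]
    have hνIio : ν (Set.Iio (0:ℝ)) = 0 := by
      rw [hνdef, Measure.smul_apply, hρdef,
        Measure.map_apply hpm measurableSet_Iio, hmwdef,
        withDensity_apply _ (hpm measurableSet_Iio)]
      have hsub : (fun x : Fin k → ℝ => ∏ i, x i) ⁻¹' Set.Iio 0
          ⊆ ⋃ i : Fin k, {x : Fin k → ℝ | x i < 0} := by
        intro x hx
        by_contra hcon
        simp only [Set.mem_iUnion, Set.mem_setOf_eq, not_exists, not_lt] at hcon
        have : 0 ≤ ∏ i, x i := Finset.prod_nonneg fun i _ => hcon i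
        exact absurd hx (by simpa [Set.mem_preimage, not_lt] using this)
      have hns : m ((fun x : Fin k → ℝ => ∏ i, x i) ⁻¹' Set.Iio 0) = 0 :=
        measure_mono_null hsub (measure_iUnion_null fun i => hnull i)
      rw [setLIntegral_measure_zero _ _ hns]
      simp
    -- smul-density identity
    have hDsmul : ∀ (n : ℕ) (x : Fin k → ℝ), D x • ((∏ i, x i) ^ n) = F n x := by
      intro n x
      have h1 : ((D x : ℝ)) = F 0 x := Real.coe_toNNReal _ (by rw [hF0 x]; positivity)
      have h2 : (∏ i, x i) ^ n = ∏ i, x i ^ n := by rw [Finset.prod_pow]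
      rw [NNReal.smul_def, smul_eq_mul, h1, h2, hF0 x]
      simp [hFdef]
      ring
    have hνint : ∀ n : ℕ, Integrable (fun t : ℝ => t ^ n) ν := by
      intro n
      rw [hνdef]
      apply Integrable.smul_measure _ hctop
      rw [hρdef, integrable_map_measure (by fun_prop) hpm.aemeasurable]
      rw [hmwdef, integrable_withDensity_iff_integrable_smul hDmeas]
      have : (fun x : Fin k → ℝ => D x • ((fun t : ℝ => t ^ n) ∘ fun x : Fin k → ℝ => ∏ i, x i) x)
          = F n := by
        funext x
        exact hDsmul n x
      rw [show (fun x : Fin k → ℝ => D x • ((fun t : ℝ => t ^ n) ∘ (fun x : Fin k → ℝ => ∏ i, x i)) x) = F n from funext fun x => hDsmul n x]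
      exact hFint n
    have hνmom : ∀ n : ℕ, ∫ t, t ^ n ∂ν = B⁻¹ * ∫ x, F n x ∂m := by
      intro n
      rw [hνdef, integral_smul_measure, hρdef,
        integral_map hpm.aemeasurable (by fun_prop), hmwdef,
        integral_withDensity_eq_integral_smul hDmeas]
      have h1 : c.toReal = B⁻¹ := by
        rw [hcdef, ENNReal.toReal_inv, ENNReal.toReal_ofReal hB0]
      rw [h1]
      rw [show (fun x : Fin k → ℝ => D x • (∏ i, x i) ^ n) = F n from funext fun x => hDsmul n x]
      simp [smul_eq_mul]
    refine ⟨hLk0nn, ν, hνprob, hνIio, hνint, ?_⟩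
    intro n
    rw [hνmom n, key n, hLk0]
    have hfac : (0:ℝ) < (k ! : ℝ) := by positivity
    field_simp
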